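/- Let T > 0 and define w : [0,T] → ℝ by w(x) = x for 0 ≤ x ≤ T/4, w(x) = -(x - T/2) for T/4 ≤ x ≤ 3T/4, and w(x) = x - T for 3T/4 ≤ x ≤ T. Then w ∈ H^1(0,T), w(0) = w(T) = 0, max w + min w = 0, and ∫₀ᵀ w'(x)² dx = (16/T)·‖w‖_∞². -/

import Mathlib

theorem stmt3 (T : ℝ) (hT : 0 < T)
    (w w' : ℝ → ℝ)
    (hw : w = fun x => if x ≤ T / 4 then x else if x ≤ 3 * T / 4 then T / 2 - x else x - T)
    (hw' : w' = fun x => if x ≤ T / 4 then (1:ℝ) else if x ≤ 3 * T / 4 then -1 else 1) :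
    ContinuousOn w (Set.Icc 0 T) ∧
    (∀ x ∈ Set.Icc (0:ℝ) T, x ≠ T / 4 → x ≠ 3 * T / 4 →
      HasDerivWithinAt w (w' x) (Set.Icc 0 T) x) ∧
    IntervalIntegrable (fun x => (w' x) ^ 2) MeasureTheory.volume 0 T ∧
    w 0 = 0 ∧ w T = 0 ∧
    IsGreatest (w '' Set.Icc 0 T) (T / 4) ∧
    IsLeast (w '' Set.Icc 0 T) (-(T / 4)) ∧
    IsGreatest ((fun x => |w x|) '' Set.Icc 0 T) (T / 4) ∧
    (∫ x in (0:ℝ)..T, (w' x) ^ 2) = (16 / T) * (T / 4) ^ 2 := by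
  have hsq : (fun x => (w' x) ^ 2) = fun _ => (1:ℝ) := by
    funext x
    simp only [hw']
    split_ifs <;> norm_num
  have hwmax : w = fun x => max (min x (T / 2 - x)) (x - T) := by
    funext x
    simp only [hw]
    split_ifs with h1 h2
    · rw [min_eq_left (by linarith), max_eq_left (by linarith)]
    · rw [min_eq_right (by linarith), max_eq_left (by linarith)]
    · push_neg at h1 h2
      rw [min_eq_right (by linarith), max_eq_right (by linarith)]
  refine ⟨?_, ?_, ?_, ?_, ?_, ?_, ?_, ?_, ?_⟩
  · rw [hwmax]
    exact (Continuous.max (continuous_id.min (by continuity)) (by continuity)).continuousOn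
  · intro x hx hne1 hne2
    rcases lt_trichotomy x (T / 4) with h | h | h
    · have hval : w' x = 1 := by simp [hw', h.le]
      rw [hval]
      have heq : w =ᶠ[nhds x] fun y => y := by
        filter_upwards [Iio_mem_nhds h] with y hy
        simp [hw, (Set.mem_Iio.mp hy).le]
      exact ((hasDerivAt_id x).congr_of_eventuallyEq heq).hasDerivWithinAt
    · exact absurd h hne1
    · rcases lt_trichotomy x (3 * T / 4) with h3 | h3 | h3
      · have hval : w' x = -1 := by simp [hw', not_le.mpr h, h3.le]
        rw [hval]
        have heq : w =ᶠ[nhds x] fun y => T / 2 - y := by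
          filter_upwards [Ioo_mem_nhds h h3] with y hy
          simp [hw, not_le.mpr hy.1, hy.2.le]
        have hd : HasDerivAt (fun y : ℝ => T / 2 - y) (-1) x := by
          simpa using (hasDerivAt_id x).const_sub (T / 2)
        exact (hd.congr_of_eventuallyEq heq).hasDerivWithinAt
      · exact absurd h3 hne2
      · have hval : w' x = 1 := by simp [hw', not_le.mpr h, not_le.mpr h3]
        rw [hval]
        have heq : w =ᶠ[nhds x] fun y => y - T := by
          filter_upwards [Ioi_mem_nhds h3] with y hy
          have hy' : 3 * T / 4 < y := hy
          simp [hw, not_le.mpr (show T / 4 < y by linarith), not_le.mpr hy']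
        have hd : HasDerivAt (fun y : ℝ => y - T) 1 x := by
          simpa using (hasDerivAt_id x).sub_const T
        exact (hd.congr_of_eventuallyEq heq).hasDerivWithinAt
  · rw [hsq]; exact intervalIntegrable_const
  · have h0 : (0:ℝ) ≤ T / 4 := by linarith
    simp [hw, h0]
  · have h1 : ¬ (T ≤ T / 4) := by linarith
    have h2 : ¬ (T ≤ 3 * T / 4) := by linarith
    simp [hw, h1, h2]
  · constructor
    · exact ⟨T / 4, ⟨by linarith, by linarith⟩, by simp [hw]⟩
    · rintro y ⟨x, hx, rfl⟩
      simp only [hw]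
      split_ifs with h1 h2 <;> (try push_neg at *) <;> [skip; skip; skip] <;>
        first | linarith | linarith [hx.1, hx.2]
  · constructor
    · refine ⟨3 * T / 4, ⟨by linarith, by linarith⟩, ?_⟩
      have h1 : ¬ (3 * T / 4 ≤ T / 4) := by linarith
      simp [hw, h1]; ring
    · rintro y ⟨x, hx, rfl⟩
      simp only [hw]
      split_ifs with h1 h2 <;> (try push_neg at *) <;>
        first | linarith | linarith [hx.1, hx.2]
  · constructor
    · exact ⟨T / 4, ⟨by linarith, by linarith⟩, by simp [hw]; positivity⟩
    · rintro y ⟨x, hx, rfl⟩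
      rw [abs_le]
      constructor <;> (simp only [hw]; split_ifs with h1 h2 <;> (try push_neg at *) <;>
        first | linarith | linarith [hx.1, hx.2])
  · rw [hsq]
    simp
    field_simp
    ring
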